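/- Let A ∈ ℝ^{n×n}, t ≥ 0, and let b_c, b_Δ ∈ ℝ^n with (b_Δ)_i ≥ 0 for all i. Then for every x ∈ ℝ^n with |x_i − (b_c)_i| ≤ (b_Δ)_i for all i, the vector exp(A t) x − exp(A t) b_c satisfies |(exp(A t) x − exp(A t) b_c)_i| ≤ (exp(|A| t) b_Δ)_i for all i, where |A| denotes the entrywise absolute value of A. In other words, exp(A t) maps the box [b_c − b_Δ, b_c + b_Δ] into the box [exp(A t) b_c − exp(|A| t) b_Δ, exp(A t) b_c + exp(|A| t) b_Δ]. -/

import Mathlib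

open Matrix

/-- Matrix exponential of a real square matrix. -/
noncomputable def mexp {m : ℕ} (A : Matrix (Fin m) (Fin m) ℝ) : Matrix (Fin m) (Fin m) ℝ :=
  NormedSpace.exp A

/-- Entrywise absolute value of a matrix. -/
def matAbs {m : ℕ} (A : Matrix (Fin m) (Fin m) ℝ) : Matrix (Fin m) (Fin m) ℝ :=
  Matrix.of fun i j => |A i j|

lemma matAbs_nonneg {m : ℕ} (A : Matrix (Fin m) (Fin m) ℝ) (i j : Fin m) :
    0 ≤ matAbs A i j := abs_nonneg _

lemma pow_abs_entry_le {m : ℕ} (M : Matrix (Fin m) (Fin m) ℝ) (k : ℕ) (i j : Fin m) :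
    |(M ^ k) i j| ≤ ((matAbs M) ^ k) i j := by
  induction k generalizing i j with
  | zero =>
    simp [Matrix.one_apply]
    split <;> simp
  | succ k ih =>
    rw [pow_succ, pow_succ, Matrix.mul_apply, Matrix.mul_apply]
    refine (Finset.abs_sum_le_sum_abs _ _).trans ?_
    apply Finset.sum_le_sum
    intro l _
    rw [abs_mul]
    exact mul_le_mul (ih i l) (le_of_eq rfl) (abs_nonneg _)
      ((abs_nonneg _).trans (ih i l))

lemma pow_entry_nonneg {m : ℕ} (M : Matrix (Fin m) (Fin m) ℝ)
    (hM : ∀ i j, 0 ≤ M i j) (k : ℕ) (i j : Fin m) : 0 ≤ (M ^ k) i j := by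
  induction k generalizing i j with
  | zero =>
    simp [Matrix.one_apply]; split <;> simp
  | succ k ih =>
    rw [pow_succ, Matrix.mul_apply]
    exact Finset.sum_nonneg fun l _ => mul_nonneg (ih i l) (hM l j)

lemma entry_summable {m : ℕ} (M : Matrix (Fin m) (Fin m) ℝ) (i j : Fin m) :
    Summable fun k : ℕ => ((Nat.factorial k : ℝ))⁻¹ * (M ^ k) i j := by
  letI : SeminormedRing (Matrix (Fin m) (Fin m) ℝ) := Matrix.linftyOpSemiNormedRing
  letI : NormedRing (Matrix (Fin m) (Fin m) ℝ) := Matrix.linftyOpNormedRing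
  letI : NormedAlgebra ℝ (Matrix (Fin m) (Fin m) ℝ) := Matrix.linftyOpNormedAlgebra
  have h : Summable fun k : ℕ => ((Nat.factorial k : ℝ))⁻¹ • M ^ k :=
    NormedSpace.expSeries_summable' (𝕂 := ℝ) M
  have h2 := h.map (Matrix.entryLinearMap ℝ ℝ i j)
    (LinearMap.continuous_of_finiteDimensional _)
  simpa [Function.comp_def, Matrix.entryLinearMap_apply, smul_eq_mul] using h2

lemma exp_entry_eq {m : ℕ} (M : Matrix (Fin m) (Fin m) ℝ) (i j : Fin m) :
    NormedSpace.exp M i j = ∑' k : ℕ, ((Nat.factorial k : ℝ))⁻¹ * (M ^ k) i j := by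
  letI : SeminormedRing (Matrix (Fin m) (Fin m) ℝ) := Matrix.linftyOpSemiNormedRing
  letI : NormedRing (Matrix (Fin m) (Fin m) ℝ) := Matrix.linftyOpNormedRing
  letI : NormedAlgebra ℝ (Matrix (Fin m) (Fin m) ℝ) := Matrix.linftyOpNormedAlgebra
  have h : Summable fun k : ℕ => ((Nat.factorial k : ℝ))⁻¹ • M ^ k :=
    NormedSpace.expSeries_summable' (𝕂 := ℝ) M
  have h2 := h.hasSum.map (Matrix.entryLinearMap ℝ ℝ i j)
    (LinearMap.continuous_of_finiteDimensional _)
  rw [NormedSpace.exp_eq_tsum (𝕂 := ℝ)]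
  have h3 : (Matrix.entryLinearMap ℝ ℝ i j) (∑' k : ℕ, ((Nat.factorial k : ℝ))⁻¹ • M ^ k)
      = ∑' k : ℕ, ((Nat.factorial k : ℝ))⁻¹ * (M ^ k) i j := by
    rw [h.hasSum.tsum_eq]
    simpa [Matrix.entryLinearMap_apply, smul_eq_mul] using h2.tsum_eq.symm
  simpa [Matrix.entryLinearMap_apply] using h3

lemma exp_abs_entry_le {m : ℕ} (M : Matrix (Fin m) (Fin m) ℝ) (i j : Fin m) :
    |NormedSpace.exp M i j| ≤ NormedSpace.exp (matAbs M) i j := by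
  rw [exp_entry_eq, exp_entry_eq]
  have hsum : Summable fun k : ℕ => ((Nat.factorial k : ℝ))⁻¹ * |(M ^ k) i j| := by
    have := (entry_summable M i j).abs
    simpa [abs_mul, abs_inv, Nat.abs_cast] using this
  have h1 : |∑' k : ℕ, ((Nat.factorial k : ℝ))⁻¹ * (M ^ k) i j|
      ≤ ∑' k : ℕ, ((Nat.factorial k : ℝ))⁻¹ * |(M ^ k) i j| := by
    simpa [Real.norm_eq_abs, abs_mul, abs_inv, Nat.abs_cast] using
      norm_tsum_le_tsum_norm (f := fun k : ℕ => ((Nat.factorial k : ℝ))⁻¹ * (M ^ k) i j)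
        (by simpa [Real.norm_eq_abs, abs_mul, abs_inv, Nat.abs_cast] using
          (entry_summable M i j).abs)
  refine h1.trans (Summable.tsum_le_tsum ?_ hsum (entry_summable (matAbs M) i j))
  intro k
  exact mul_le_mul_of_nonneg_left (pow_abs_entry_le M k i j) (by positivity)

lemma exp_nonneg_entry {m : ℕ} (M : Matrix (Fin m) (Fin m) ℝ)
    (hM : ∀ i j, 0 ≤ M i j) (i j : Fin m) : 0 ≤ NormedSpace.exp M i j := by
  rw [exp_entry_eq]
  exact tsum_nonneg fun k => mul_nonneg (by positivity) (pow_entry_nonneg M hM k i j)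

/-- `exp(A t)` maps the box `[b_c − b_Δ, b_c + b_Δ]` into the box
`[exp(A t) b_c − exp(|A| t) b_Δ, exp(A t) b_c + exp(|A| t) b_Δ]`. -/
theorem stmt3 {n : ℕ} (A : Matrix (Fin n) (Fin n) ℝ) (t : ℝ) (ht : 0 ≤ t)
    (bc bΔ : Fin n → ℝ) (hbΔ : ∀ i, 0 ≤ bΔ i)
    (x : Fin n → ℝ) (hx : ∀ i, |x i - bc i| ≤ bΔ i) :
    ∀ i, |(mexp (t • A) *ᵥ x - mexp (t • A) *ᵥ bc) i| ≤ (mexp (t • matAbs A) *ᵥ bΔ) i := by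
  intro i
  have habs : matAbs (t • A) = t • matAbs A := by
    ext i j
    simp [matAbs, abs_mul, abs_of_nonneg ht]
  simp only [Pi.sub_apply, Matrix.mulVec, dotProduct, mexp]
  rw [← Finset.sum_sub_distrib]
  refine (Finset.abs_sum_le_sum_abs _ _).trans (Finset.sum_le_sum fun j _ => ?_)
  rw [← mul_sub, abs_mul]
  calc |NormedSpace.exp (t • A) i j| * |x j - bc j|
      ≤ NormedSpace.exp (t • matAbs A) i j * bΔ j := by
        refine mul_le_mul ?_ (hx j) (abs_nonneg _) ?_
        · rw [← habs]; exact exp_abs_entry_le _ i j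
        · exact exp_nonneg_entry _ (fun i j => by
            simp [Matrix.smul_apply, mul_nonneg ht (matAbs_nonneg A i j)]) i j
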